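/- arXiv:1801.04809 — 4 statements merged into one kernel-verified Lean document; each statement's English description precedes it below -/
import Mathlib

section
/- Let P and Q be Motzkin paths of the same size n. If P ≤_M Q in the Tamari-type partial order on Motzkin paths, then cls(P) = cls(Q), i.e., P and Q have the same sequence of heights of diagonal steps. -/
/-- Steps: north `N = (0,1)`, east `E = (1,0)`, diagonal `D = (1,1)`. -/
inductive MStep : Type
  | N | E | D
  deriving DecidableEq

/-- The contribution of a step to the height `y - x` above the diagonal. -/
def MStep.hdiff : MStep → ℤ
  | .N => 1
  | .E => -1
  | .D => 0

/-- The total height change `y - x` along a word of steps. -/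
def wsum (p : List MStep) : ℤ := (p.map MStep.hdiff).sum

/-- A (nonempty) Motzkin path: starts at the origin, never goes below the
diagonal `y = x`, and ends on the diagonal. -/
def IsMotzkin (p : List MStep) : Prop :=
  p ≠ [] ∧ (∀ q, q <+: p → 0 ≤ wsum q) ∧ wsum p = 0

/-- A Dyck path is a Motzkin path with no diagonal step. -/
def IsDyck (p : List MStep) : Prop := IsMotzkin p ∧ MStep.D ∉ p

/-- A path is primitive if it touches the diagonal only at its endpoints. -/
def IsPrimitive (p : List MStep) : Prop :=
  IsMotzkin p ∧ ∀ q, q <+: p → q ≠ [] → q ≠ p → 0 < wsum q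

/-- Covering relation for the Tamari-type order on Motzkin paths:
`Q` covers `P` iff `P = P₁·E·P₂·P₃` and `Q = P₁·P₂·E·P₃` with `P₂` a nonempty
primitive Motzkin path. -/
def MCover (P Q : List MStep) : Prop :=
  ∃ P₁ P₂ P₃ : List MStep, IsMotzkin P₂ ∧ IsPrimitive P₂ ∧
    P = P₁ ++ [MStep.E] ++ P₂ ++ P₃ ∧ Q = P₁ ++ P₂ ++ [MStep.E] ++ P₃

/-- Covering relation of the Tamari order on Dyck paths. -/
def DCover (P Q : List MStep) : Prop :=
  ∃ P₁ P₂ P₃ : List MStep, IsDyck P₂ ∧ IsPrimitive P₂ ∧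
    P = P₁ ++ [MStep.E] ++ P₂ ++ P₃ ∧ Q = P₁ ++ P₂ ++ [MStep.E] ++ P₃

/-- The partial order `≤_M` on Motzkin paths. -/
def MLE : List MStep → List MStep → Prop := Relation.ReflTransGen MCover

/-- The Tamari order `≤_D` on Dyck paths. -/
def DLE : List MStep → List MStep → Prop := Relation.ReflTransGen DCover

/-- Heights of the diagonal steps along a path, starting from height `h`. -/
def clsFrom : List MStep → ℤ → List ℤ
  | [], _ => []
  | .N :: rest, h => clsFrom rest (h + 1)
  | .E :: rest, h => clsFrom rest h
  | .D :: rest, h => (h + 1) :: clsFrom rest (h + 1)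

/-- The class of a Motzkin path: the sequence of heights (ending `y`-coordinates)
of its diagonal steps, in the order they occur. -/
def cls (p : List MStep) : List ℤ := clsFrom p 0

/-- A path avoids `NNN` if it has no three consecutive north steps. -/
def AvoidsNNN (p : List MStep) : Prop := ¬ ([MStep.N, MStep.N, MStep.N] <:+: p)

/-- Callan's bijection `φ`: replace each factor `NE` by `D` and each factor
`NNE` by `N`, leaving remaining east steps unchanged. -/
def phi : List MStep → List MStep
  | [] => []
  | .N :: .N :: .E :: rest => .N :: phi rest
  | .N :: .E :: rest => .D :: phi rest
  | s :: rest => s :: phi rest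

/-- The inverse of `φ`: replace each `D` by `NE` and each `N` by `NNE`. -/
def psi : List MStep → List MStep
  | [] => []
  | .N :: rest => .N :: .N :: .E :: psi rest
  | .D :: rest => .N :: .E :: psi rest
  | .E :: rest => .E :: psi rest

/-- For each north step of the path (in order), record `N` if it is immediately
followed by an east step and `E` otherwise. -/
def typeRaw : List MStep → List MStep
  | [] => []
  | .N :: rest => (if rest.head? = some MStep.E then MStep.N else MStep.E) :: typeRaw rest
  | _ :: rest => typeRaw rest

/-- The type of a Dyck path of length `2n`: the word of length `n - 1` whose
`i`-th letter is `N` iff the `i`-th north step is immediately followed by an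
east step (the letter of the last north step is dropped). -/
def typeW (p : List MStep) : List MStep := (typeRaw p).dropLast

/-- `ds p` is the number of north steps of `p` that are neither immediately
preceded nor immediately followed by another north step. -/
def ds (p : List MStep) : ℕ :=
  ((Finset.range p.length).filter (fun i =>
    p[i]? = some MStep.N ∧ p[i + 1]? ≠ some MStep.N ∧
      (i = 0 ∨ p[i - 1]? ≠ some MStep.N))).card

/-- The number of contacts of a path with the diagonal `y = x` (lattice points
of the path lying on the diagonal, endpoints included). -/
def cont (p : List MStep) : ℕ :=
  ((Finset.range (p.length + 1)).filter (fun i => wsum (p.take i) = 0)).card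

def hupd : MStep → ℤ
  | .N => 1
  | .E => 0
  | .D => 1

def hupdL (p : List MStep) : ℤ := (p.map hupd).sum

lemma clsFrom_append (a b : List MStep) (h : ℤ) :
    clsFrom (a ++ b) h = clsFrom a h ++ clsFrom b (h + hupdL a) := by
  induction a generalizing h with
  | nil => simp [clsFrom, hupdL]
  | cons s rest ih =>
    cases s <;> simp [clsFrom, hupdL, hupd, ih, add_assoc] <;> ring_nf

lemma hupdL_append (a b : List MStep) : hupdL (a ++ b) = hupdL a + hupdL b := by
  simp [hupdL]

lemma clsFrom_E_cons (l : List MStep) (h : ℤ) :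
    clsFrom (MStep.E :: l) h = clsFrom l h := rfl

lemma cls_eq_of_MCover {P Q : List MStep} (h : MCover P Q) : cls P = cls Q := by
  obtain ⟨P₁, P₂, P₃, _, _, hP, hQ⟩ := h
  subst hP hQ
  simp [cls, clsFrom_append, hupdL_append, show hupdL [MStep.E] = 0 from rfl,
    clsFrom_E_cons, add_comm, add_assoc, add_left_comm]

/-- If `P ≤_M Q` for Motzkin paths `P, Q` of the same size `n`,
then `P` and `Q` have the same class, i.e. the same sequence of heights of
their diagonal steps. -/
theorem cls_eq_of_MLE (n : ℕ) (P Q : List MStep)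
    (hP : IsMotzkin P) (hQ : IsMotzkin Q)
    (hPn : P.length = n) (hQn : Q.length = n)
    (h : MLE P Q) : cls P = cls Q := by
  clear hP hQ hPn hQn
  induction h with
  | refl => rfl
  | tail _ hc ih => exact ih.trans (cls_eq_of_MCover hc)
end

section
/- The map φ, which replaces in a Dyck path each maximal run of north steps together with the immediately following east step as follows — each factor NE (isolated north step followed by an east step) is replaced by a single diagonal step D, and each factor NNE (a run of two north steps followed by an east step) is replaced by a single north step N, leaving all remaining east steps unchanged — is a bijection from the set of Dyck paths avoiding three consecutive north steps NNN onto the set of Motzkin paths. Its inverse replaces each D by NE and each N by NNE. -/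
section Aux

open MStep

lemma wsum_nil : wsum [] = 0 := rfl

lemma wsum_cons (a : MStep) (l : List MStep) : wsum (a :: l) = a.hdiff + wsum l := by
  simp [wsum]

lemma wsum_append (a b : List MStep) : wsum (a ++ b) = wsum a + wsum b := by
  simp [wsum]

/-- Decomposition of a word into blocks `NNE`, `NE`, `E`. -/
inductive Blocks : List MStep → Prop
  | nil : Blocks []
  | nne {r} : Blocks r → Blocks (N :: N :: E :: r)
  | ne {r} : Blocks r → Blocks (N :: E :: r)
  | e {r} : Blocks r → Blocks (E :: r)

lemma avoids_tail {a : MStep} {r : List MStep} (h : AvoidsNNN (a :: r)) : AvoidsNNN r :=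
  fun hi => h (hi.trans (List.suffix_cons a r).isInfix)

theorem blocks_of : ∀ (R : List MStep), MStep.D ∉ R → AvoidsNNN R →
    R.getLast? ≠ some MStep.N → Blocks R
  | [], _, _, _ => Blocks.nil
  | D :: r, hD, _, _ => by simp at hD
  | E :: r, hD, hA, hL => by
    refine Blocks.e (blocks_of r (fun hm => hD (by simp [hm])) (avoids_tail hA) ?_)
    cases r with
    | nil => simp
    | cons b l => rw [List.getLast?_cons_cons] at hL; exact hL
  | [N], _, _, hL => by simp at hL
  | N :: D :: r, hD, _, _ => by simp at hD
  | N :: E :: r, hD, hA, hL => by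
    refine Blocks.ne (blocks_of r (fun hm => hD (by simp [hm])) (avoids_tail (avoids_tail hA)) ?_)
    cases r with
    | nil => simp
    | cons b l =>
      rw [List.getLast?_cons_cons, List.getLast?_cons_cons] at hL; exact hL
  | [N, N], _, _, hL => by simp at hL
  | N :: N :: N :: r, _, hA, _ =>
    absurd ⟨[], r, rfl⟩ hA
  | N :: N :: D :: r, hD, _, _ => by simp at hD
  | N :: N :: E :: r, hD, hA, hL => by
    refine Blocks.nne (blocks_of r (fun hm => hD (by simp [hm]))
      (avoids_tail (avoids_tail (avoids_tail hA))) ?_)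
    cases r with
    | nil => simp
    | cons b l =>
      rw [List.getLast?_cons_cons, List.getLast?_cons_cons, List.getLast?_cons_cons] at hL
      exact hL

lemma blocks_noD {R : List MStep} (h : Blocks R) : MStep.D ∉ R := by
  induction h with
  | nil => simp
  | nne _ ih => simp [ih]
  | ne _ ih => simp [ih]
  | e _ ih => simp [ih]

lemma not_prefix_nnn {a b : MStep} {r : List MStep}
    (hab : a ≠ N ∨ b ≠ N) : ¬ ([N, N, N] <+: a :: b :: r) := by
  rintro ⟨t, ht⟩
  simp only [List.cons_append, List.cons.injEq] at ht
  rcases hab with h | h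
  · exact h ht.1.symm
  · exact h ht.2.1.symm

lemma blocks_avoids {R : List MStep} (h : Blocks R) : AvoidsNNN R := by
  induction h with
  | nil => rintro ⟨s, t, hst⟩; simp at hst
  | @nne r _ ih =>
    intro hi
    rcases List.infix_cons_iff.mp hi with hp | hi
    · rcases hp with ⟨t, ht⟩; simp at ht
    rcases List.infix_cons_iff.mp hi with hp | hi
    · rcases hp with ⟨t, ht⟩; simp at ht
    rcases List.infix_cons_iff.mp hi with hp | hi
    · rcases hp with ⟨t, ht⟩; simp at ht
    · exact ih hi
  | @ne r _ ih =>
    intro hi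
    rcases List.infix_cons_iff.mp hi with hp | hi
    · rcases hp with ⟨t, ht⟩; simp at ht
    rcases List.infix_cons_iff.mp hi with hp | hi
    · rcases hp with ⟨t, ht⟩; simp at ht
    · exact ih hi
  | @e r _ ih =>
    intro hi
    rcases List.infix_cons_iff.mp hi with hp | hi
    · rcases hp with ⟨t, ht⟩; simp at ht
    · exact ih hi

lemma phi_nne (r : List MStep) : phi (N :: N :: E :: r) = N :: phi r := rfl
lemma phi_ne (r : List MStep) : phi (N :: E :: r) = D :: phi r := rfl
lemma phi_e (r : List MStep) : phi (E :: r) = E :: phi r := by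
  cases r with
  | nil => rfl
  | cons a l => cases a <;> rfl

lemma psi_phi {R : List MStep} (h : Blocks R) : psi (phi R) = R := by
  induction h with
  | nil => rfl
  | nne _ ih => rw [phi_nne]; simp [psi, ih]
  | ne _ ih => rw [phi_ne]; simp [psi, ih]
  | e _ ih => rw [phi_e]; simp [psi, ih]

lemma phi_psi : ∀ P : List MStep, phi (psi P) = P
  | [] => rfl
  | N :: p => by rw [show psi (N :: p) = N :: N :: E :: psi p from rfl, phi_nne, phi_psi p]
  | D :: p => by rw [show psi (D :: p) = N :: E :: psi p from rfl, phi_ne, phi_psi p]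
  | E :: p => by rw [show psi (E :: p) = E :: psi p from rfl, phi_e, phi_psi p]

lemma blocks_psi : ∀ P : List MStep, Blocks (psi P)
  | [] => Blocks.nil
  | N :: p => Blocks.nne (blocks_psi p)
  | D :: p => Blocks.ne (blocks_psi p)
  | E :: p => Blocks.e (blocks_psi p)

lemma wsum_phi {R : List MStep} (h : Blocks R) : wsum (phi R) = wsum R := by
  induction h with
  | nil => rfl
  | nne _ ih => rw [phi_nne]; simp [wsum_cons, ih, MStep.hdiff]
  | ne _ ih => rw [phi_ne]; simp [wsum_cons, ih, MStep.hdiff]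
  | e _ ih => rw [phi_e]; simp [wsum_cons, ih, MStep.hdiff]

lemma wsum_psi : ∀ P : List MStep, wsum (psi P) = wsum P
  | [] => rfl
  | N :: p => by
    rw [show psi (N :: p) = N :: N :: E :: psi p from rfl]
    simp [wsum_cons, wsum_psi p, MStep.hdiff]
  | D :: p => by
    rw [show psi (D :: p) = N :: E :: psi p from rfl]
    simp [wsum_cons, wsum_psi p, MStep.hdiff]
  | E :: p => by
    rw [show psi (E :: p) = E :: psi p from rfl]
    simp [wsum_cons, wsum_psi p, MStep.hdiff]

lemma psi_ne_nil {P : List MStep} (h : P ≠ []) : psi P ≠ [] := by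
  cases P with
  | nil => exact absurd rfl h
  | cons a p => cases a <;> simp [psi]

lemma phi_ne_nil {R : List MStep} (hb : Blocks R) (h : R ≠ []) : phi R ≠ [] := by
  cases hb with
  | nil => exact absurd rfl h
  | nne _ => rw [phi_nne]; simp
  | ne _ => rw [phi_ne]; simp
  | e _ => rw [phi_e]; simp

lemma psi_prefix_bound : ∀ (P : List MStep) (c : ℤ),
    (∀ q, q <+: P → c ≤ wsum q) → ∀ q, q <+: psi P → c ≤ wsum q
  | [], c, h, q, hq => by
    rw [List.prefix_nil.mp hq]; exact h [] List.nil_prefix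
  | N :: p, c, h, q, hq => by
    have hc0 : c ≤ 0 := by simpa [wsum] using h [] List.nil_prefix
    have hp : ∀ r, r <+: p → c - 1 ≤ wsum r := fun r hr => by
      have := h (N :: r) (List.cons_prefix_cons.mpr ⟨rfl, hr⟩)
      rw [wsum_cons] at this; simp [MStep.hdiff] at this; linarith
    have ih := psi_prefix_bound p (c - 1) hp
    rw [show psi (N :: p) = N :: N :: E :: psi p from rfl] at hq
    rcases List.prefix_cons_iff.mp hq with rfl | ⟨t1, rfl, ht1⟩
    · simpa [wsum]
    rcases List.prefix_cons_iff.mp ht1 with rfl | ⟨t2, rfl, ht2⟩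
    · simp [wsum_cons, wsum, MStep.hdiff]; linarith
    rcases List.prefix_cons_iff.mp ht2 with rfl | ⟨t3, rfl, ht3⟩
    · simp [wsum_cons, wsum, MStep.hdiff]; linarith
    · have := ih t3 ht3
      simp [wsum_cons, MStep.hdiff]; linarith
  | D :: p, c, h, q, hq => by
    have hc0 : c ≤ 0 := by simpa [wsum] using h [] List.nil_prefix
    have hp : ∀ r, r <+: p → c ≤ wsum r := fun r hr => by
      have := h (D :: r) (List.cons_prefix_cons.mpr ⟨rfl, hr⟩)
      rw [wsum_cons] at this; simpa [MStep.hdiff] using this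
    have ih := psi_prefix_bound p c hp
    rw [show psi (D :: p) = N :: E :: psi p from rfl] at hq
    rcases List.prefix_cons_iff.mp hq with rfl | ⟨t1, rfl, ht1⟩
    · simpa [wsum]
    rcases List.prefix_cons_iff.mp ht1 with rfl | ⟨t2, rfl, ht2⟩
    · simp [wsum_cons, wsum, MStep.hdiff]; linarith
    · have := ih t2 ht2
      simp [wsum_cons, MStep.hdiff]; linarith
  | E :: p, c, h, q, hq => by
    have hc0 : c ≤ 0 := by simpa [wsum] using h [] List.nil_prefix
    have hp : ∀ r, r <+: p → c + 1 ≤ wsum r := fun r hr => by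
      have := h (E :: r) (List.cons_prefix_cons.mpr ⟨rfl, hr⟩)
      rw [wsum_cons] at this; simp [MStep.hdiff] at this; linarith
    have ih := psi_prefix_bound p (c + 1) hp
    rw [show psi (E :: p) = E :: psi p from rfl] at hq
    rcases List.prefix_cons_iff.mp hq with rfl | ⟨t1, rfl, ht1⟩
    · simpa [wsum]
    · have := ih t1 ht1
      simp [wsum_cons, MStep.hdiff]; linarith

lemma phi_prefix_bound {R : List MStep} (hb : Blocks R) : ∀ (c : ℤ),
    (∀ q, q <+: R → c ≤ wsum q) → ∀ q, q <+: phi R → c ≤ wsum q := by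
  induction hb with
  | nil =>
    intro c h q hq
    rw [List.prefix_nil.mp hq]; exact h [] List.nil_prefix
  | @nne r _ ih =>
    intro c h q hq
    have hc0 : c ≤ 0 := by simpa [wsum] using h [] List.nil_prefix
    have hp : ∀ s, s <+: r → c - 1 ≤ wsum s := fun s hs => by
      have := h (N :: N :: E :: s)
        (List.cons_prefix_cons.mpr ⟨rfl, List.cons_prefix_cons.mpr ⟨rfl,
          List.cons_prefix_cons.mpr ⟨rfl, hs⟩⟩⟩)
      simp [wsum_cons, MStep.hdiff] at this; linarith
    rw [phi_nne] at hq
    rcases List.prefix_cons_iff.mp hq with rfl | ⟨t1, rfl, ht1⟩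
    · simpa [wsum]
    · have := ih (c - 1) hp t1 ht1
      simp [wsum_cons, MStep.hdiff]; linarith
  | @ne r _ ih =>
    intro c h q hq
    have hc0 : c ≤ 0 := by simpa [wsum] using h [] List.nil_prefix
    have hp : ∀ s, s <+: r → c ≤ wsum s := fun s hs => by
      have := h (N :: E :: s)
        (List.cons_prefix_cons.mpr ⟨rfl, List.cons_prefix_cons.mpr ⟨rfl, hs⟩⟩)
      simp [wsum_cons, MStep.hdiff] at this; linarith
    rw [phi_ne] at hq
    rcases List.prefix_cons_iff.mp hq with rfl | ⟨t1, rfl, ht1⟩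
    · simpa [wsum]
    · have := ih c hp t1 ht1
      simp [wsum_cons, MStep.hdiff]; linarith
  | @e r _ ih =>
    intro c h q hq
    have hc0 : c ≤ 0 := by simpa [wsum] using h [] List.nil_prefix
    have hp : ∀ s, s <+: r → c + 1 ≤ wsum s := fun s hs => by
      have := h (E :: s) (List.cons_prefix_cons.mpr ⟨rfl, hs⟩)
      simp [wsum_cons, MStep.hdiff] at this; linarith
    rw [phi_e] at hq
    rcases List.prefix_cons_iff.mp hq with rfl | ⟨t1, rfl, ht1⟩
    · simpa [wsum]
    · have := ih (c + 1) hp t1 ht1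
      simp [wsum_cons, MStep.hdiff]; linarith

lemma dyck_getLast {R : List MStep} (h : IsDyck R) : R.getLast? ≠ some MStep.N := by
  intro hL
  obtain ⟨R', rfl⟩ := List.getLast?_eq_some_iff.mp hL
  obtain ⟨⟨_, hpre, hsum⟩, _⟩ := h
  have h1 : (0:ℤ) ≤ wsum R' := hpre R' ⟨[MStep.N], rfl⟩
  rw [wsum_append] at hsum
  have h2 : wsum [MStep.N] = 1 := rfl
  rw [h2] at hsum
  omega

lemma blocks_of_dyck {R : List MStep} (h : IsDyck R) (hA : AvoidsNNN R) : Blocks R :=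
  blocks_of R h.2 hA (dyck_getLast h)

end Aux

/-- `φ` is a bijection from the set of Dyck paths avoiding
`NNN` onto the set of Motzkin paths, with inverse `ψ` (replacing each `D` by
`NE` and each `N` by `NNE`). -/
theorem phi_bijection :
    Set.BijOn phi {R | IsDyck R ∧ AvoidsNNN R} {P | IsMotzkin P} ∧
    (∀ R : List MStep, IsDyck R → AvoidsNNN R → psi (phi R) = R) ∧
    (∀ P : List MStep, IsMotzkin P → phi (psi P) = P) := by
  have hmaps : ∀ R, IsDyck R → AvoidsNNN R → IsMotzkin (phi R) := by
    intro R hd hA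
    have hb := blocks_of_dyck hd hA
    obtain ⟨⟨hne, hpre, hsum⟩, _⟩ := hd
    exact ⟨phi_ne_nil hb hne, phi_prefix_bound hb 0 hpre, by rw [wsum_phi hb, hsum]⟩
  have hpsimem : ∀ P, IsMotzkin P → IsDyck (psi P) ∧ AvoidsNNN (psi P) := by
    intro P hm
    obtain ⟨hne, hpre, hsum⟩ := hm
    refine ⟨⟨⟨psi_ne_nil hne, psi_prefix_bound P 0 hpre, by rw [wsum_psi, hsum]⟩,
      blocks_noD (blocks_psi P)⟩, blocks_avoids (blocks_psi P)⟩
  refine ⟨⟨?_, ?_, ?_⟩, ?_, fun P _ => phi_psi P⟩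
  · intro R hR
    exact hmaps R hR.1 hR.2
  · intro R₁ h₁ R₂ h₂ heq
    have e₁ := psi_phi (blocks_of_dyck h₁.1 h₁.2)
    have e₂ := psi_phi (blocks_of_dyck h₂.1 h₂.2)
    rw [← e₁, ← e₂, heq]
  · intro P hP
    exact ⟨psi P, hpsimem P hP, phi_psi P⟩
  · intro R hd hA
    exact psi_phi (blocks_of_dyck hd hA)
end

section
/- Let S = N·S₁·E·S₂ be a Dyck path, where each of S₁ and S₂ is either empty or a Dyck path. Then S avoids three consecutive north steps NNN if and only if: each of S₁ and S₂ is either empty or avoids NNN, and moreover if S₁ is nonempty then S₁ starts with the two steps NE. -/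

lemma prefix_case (c b : List MStep) (h : [MStep.N, MStep.N, MStep.N] <+: c ++ MStep.E :: b) :
    [MStep.N, MStep.N, MStep.N] <+: c := by
  match c with
  | [] => simp [List.cons_prefix_cons] at h
  | [x] => simp [List.cons_prefix_cons] at h
  | [x, y] => simp [List.cons_prefix_cons] at h
  | x :: y :: z :: r =>
      simp only [List.cons_append, List.cons_prefix_cons] at h ⊢
      exact ⟨h.1, h.2.1, h.2.2.1, List.nil_prefix⟩

lemma infix_split (a b : List MStep)
    (h : [MStep.N, MStep.N, MStep.N] <:+: a ++ MStep.E :: b) :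
    [MStep.N, MStep.N, MStep.N] <:+: a ∨ [MStep.N, MStep.N, MStep.N] <:+: b := by
  induction a with
  | nil =>
      rcases List.infix_cons_iff.1 h with hp | hi
      · simp [List.cons_prefix_cons] at hp
      · exact Or.inr hi
  | cons x a ih =>
      rcases List.infix_cons_iff.1 h with hp | hi
      · exact Or.inl (prefix_case (x :: a) b hp).isInfix
      · rcases ih hi with h' | h'
        · exact Or.inl (List.infix_cons h')
        · exact Or.inr h'

lemma dyck_head (S : List MStep) (hd : IsDyck S) (hne : S ≠ []) :
    ∃ t, S = MStep.N :: t := by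
  obtain ⟨⟨-, hpre, -⟩, hD⟩ := hd
  match S with
  | [] => exact absurd rfl hne
  | x :: t =>
      have h1 : (0:ℤ) ≤ wsum [x] := hpre [x] ⟨t, rfl⟩
      cases x with
      | N => exact ⟨t, rfl⟩
      | E => simp [wsum, MStep.hdiff] at h1
      | D => simp at hD

/-- Let `S = N·S₁·E·S₂` be a Dyck path, with `S₁, S₂` each
either empty or a Dyck path. Then `S` avoids `NNN` iff each of `S₁` and `S₂`
is either empty or avoids `NNN`, and if `S₁` is nonempty then it starts with
the two steps `NE`. -/
theorem avoidsNNN_decomposition (S₁ S₂ : List MStep)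
    (h₁ : S₁ = [] ∨ IsDyck S₁) (h₂ : S₂ = [] ∨ IsDyck S₂) :
    AvoidsNNN ([MStep.N] ++ S₁ ++ [MStep.E] ++ S₂) ↔
      ((S₁ = [] ∨ AvoidsNNN S₁) ∧ (S₂ = [] ∨ AvoidsNNN S₂) ∧
        (S₁ ≠ [] → [MStep.N, MStep.E] <+: S₁)) := by
  have heq : [MStep.N] ++ S₁ ++ [MStep.E] ++ S₂ = MStep.N :: (S₁ ++ MStep.E :: S₂) := by
    simp
  rw [heq]
  constructor
  · intro h
    refine ⟨?_, ?_, ?_⟩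
    · refine Or.inr fun hinf => h ?_
      exact List.infix_cons (hinf.trans ⟨[], MStep.E :: S₂, by simp⟩)
    · refine Or.inr fun hinf => h ?_
      exact hinf.trans ⟨MStep.N :: S₁ ++ [MStep.E], [], by simp⟩
    · intro hne
      rcases h₁ with rfl | hd
      · exact absurd rfl hne
      obtain ⟨t, ht⟩ := dyck_head _ hd hne
      have hD : MStep.D ∉ S₁ := hd.2
      subst ht
      match t, hd, hD with
      | [], hd, hD =>
          have := hd.1.2.2
          simp [wsum, MStep.hdiff] at this
      | y :: r, hd, hD =>
          cases y with
          | N =>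
              exact absurd (show _ from ⟨[], r ++ MStep.E :: S₂, by simp⟩) h
          | E => exact ⟨r, rfl⟩
          | D => simp at hD
  · rintro ⟨hA, hB, hNE⟩ hinf
    rcases List.infix_cons_iff.1 hinf with hp | hi
    · rw [List.cons_prefix_cons] at hp
      obtain ⟨-, hp⟩ := hp
      rcases hA with rfl | _
      · simp [List.cons_prefix_cons] at hp
      · have hne : S₁ ≠ [] := by
          rintro rfl; simp [List.cons_prefix_cons] at hp
        obtain ⟨u, hu⟩ := hNE hne
        rw [← hu, List.append_assoc] at hp
        simp [List.cons_prefix_cons] at hp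
    · rcases infix_split S₁ S₂ hi with h' | h'
      · rcases hA with rfl | hA
        · simp at h'
        · exact hA h'
      · rcases hB with rfl | hB
        · simp at h'
        · exact hB h'
end

section
/- Let [R, S] be a synchronized interval in the Tamari lattice on Dyck paths of length 2n such that both R and S avoid three consecutive north steps NNN. Then ds(R) = ds(S). -/
def dsS (prev : MStep) (p : List MStep) : ℕ :=
  ∑ i ∈ Finset.range p.length,
    if p[i]? = some MStep.N ∧ p[i + 1]? ≠ some MStep.N ∧ (prev :: p)[i]? ≠ some MStep.N
    then 1 else 0

lemma ds_eq_dsS (p : List MStep) : ds p = dsS MStep.E p := by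
  rw [ds, dsS, Finset.card_filter]
  refine Finset.sum_congr rfl fun i _ => ?_
  congr 1
  cases i with
  | zero => simp
  | succ j => simp

lemma dsS_cons (prev a : MStep) (p : List MStep) :
    dsS prev (a :: p) =
      (if a = MStep.N ∧ p.head? ≠ some MStep.N ∧ prev ≠ MStep.N then 1 else 0) + dsS a p := by
  rw [dsS, List.length_cons, Finset.sum_range_succ']
  have h0 : (if (a :: p)[0]? = some MStep.N ∧ (a :: p)[1]? ≠ some MStep.N ∧
      (prev :: a :: p)[0]? ≠ some MStep.N then 1 else 0) =
      (if a = MStep.N ∧ p.head? ≠ some MStep.N ∧ prev ≠ MStep.N then 1 else 0) := by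
    congr 1
    simp [List.head?_eq_getElem?]
  rw [h0, add_comm]
  congr 1

lemma getLast?_cons_ne {a : MStep} {l : List MStep} (h : l ≠ []) :
    (a :: l).getLast? = l.getLast? := by
  cases l with
  | nil => exact absurd rfl h
  | cons b t => exact List.getLast?_cons_cons

lemma lastne {a : MStep} {p : List MStep}
    (h : (a :: p).getLast? ≠ some MStep.N) : p.getLast? ≠ some MStep.N := by
  cases p with
  | nil => simp
  | cons b t => rwa [List.getLast?_cons_cons] at h

lemma avoid_tail {a : MStep} {p : List MStep} (h : AvoidsNNN (a :: p)) : AvoidsNNN p := by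
  intro hc
  exact h (hc.trans (List.suffix_cons a p).isInfix)

lemma key : ∀ p : List MStep, AvoidsNNN p → MStep.D ∉ p → p.getLast? ≠ some MStep.N →
    dsS MStep.E p + p.count MStep.N = 2 * (typeRaw p).count MStep.N
  | [] => by intros; simp [dsS, typeRaw]
  | .D :: r => by intro _ hD _; exact absurd (by simp) hD
  | .E :: r => by
    intro ha hD hl
    have ih := key r (avoid_tail ha) (fun h => hD (List.mem_cons_of_mem _ h)) (lastne hl)
    rw [dsS_cons]
    simpa [typeRaw] using ih
  | [.N] => by
    intro _ _ hl
    exact absurd rfl hl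
  | .N :: .D :: r => by intro _ hD _; exact absurd (by simp) hD
  | .N :: .E :: r => by
    intro ha hD hl
    have ih := key r (avoid_tail (avoid_tail ha))
      (fun h => hD (by simp [h])) (lastne (lastne hl))
    rw [dsS_cons, dsS_cons]
    have ht : typeRaw (.N :: .E :: r) = .N :: typeRaw r := rfl
    rw [ht]
    simp only [List.count_cons, List.head?]
    simp
    omega
  | [.N, .N] => by
    intro _ _ hl
    rw [List.getLast?_cons_cons] at hl
    exact absurd rfl hl
  | .N :: .N :: .D :: r => by intro _ hD _; exact absurd (by simp) hD
  | .N :: .N :: .N :: r => by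
    intro ha _ _
    exact absurd ⟨[], r, by simp⟩ ha
  | .N :: .N :: .E :: r => by
    intro ha hD hl
    have ih := key r (avoid_tail (avoid_tail (avoid_tail ha)))
      (fun h => hD (by simp [h])) (lastne (lastne (lastne hl)))
    rw [dsS_cons, dsS_cons, dsS_cons]
    have ht : typeRaw (.N :: .N :: .E :: r) = .E :: .N :: typeRaw r := rfl
    rw [ht]
    simp only [List.count_cons, List.head?]
    simp
    omega

lemma typeRaw_nil_of_no_N : ∀ p : List MStep, MStep.N ∉ p → typeRaw p = []
  | [] => by intro; rfl
  | .N :: r => by intro h; exact absurd (by simp) h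
  | .E :: r => by
    intro h
    exact typeRaw_nil_of_no_N r (fun hc => h (List.mem_cons_of_mem _ hc))
  | .D :: r => by
    intro h
    exact typeRaw_nil_of_no_N r (fun hc => h (List.mem_cons_of_mem _ hc))

lemma typeRaw_last : ∀ p : List MStep, MStep.D ∉ p → p.getLast? ≠ some MStep.N →
    MStep.N ∈ p → (typeRaw p).getLast? = some MStep.N
  | [] => by intro _ _ h; simp at h
  | .D :: r => by intro hD _ _; exact absurd (by simp) hD
  | .E :: r => by
    intro hD hl hN
    have hNr : MStep.N ∈ r := by
      rcases List.mem_cons.1 hN with h | h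
      · exact absurd h.symm (by simp)
      · exact h
    have := typeRaw_last r (fun h => hD (List.mem_cons_of_mem _ h)) (lastne hl) hNr
    simpa [typeRaw] using this
  | [.N] => by intro _ hl _; exact absurd rfl hl
  | .N :: .D :: r => by intro hD _ _; exact absurd (by simp) hD
  | .N :: .E :: r => by
    intro hD hl _
    have ht : typeRaw (.N :: .E :: r) = .N :: typeRaw r := rfl
    rw [ht]
    by_cases hNr : MStep.N ∈ r
    · have ih := typeRaw_last r (fun h => hD (by simp [h])) (lastne (lastne hl)) hNr
      have hne : typeRaw r ≠ [] := by
        intro h; rw [h] at ih; simp at ih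
      rw [getLast?_cons_ne hne]
      exact ih
    · rw [typeRaw_nil_of_no_N r hNr]
      rfl
  | .N :: .N :: r => by
    intro hD hl hN
    have hNr : MStep.N ∈ (.N :: r : List MStep) := by simp
    have ih := typeRaw_last (.N :: r) (fun h => hD (by simp at h ⊢; tauto)) (lastne hl) hNr
    have hne : typeRaw (.N :: r) ≠ [] := by
      intro h; rw [h] at ih; simp at ih
    have ht : typeRaw (.N :: .N :: r) = .E :: typeRaw (.N :: r) := rfl
    rw [ht, getLast?_cons_ne hne]
    exact ih

lemma wsum_eq_counts (p : List MStep) :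
    wsum p = (p.count MStep.N : ℤ) - (p.count MStep.E : ℤ) := by
  induction p with
  | nil => simp [wsum]
  | cons a r ih =>
    rw [wsum, List.map_cons, List.sum_cons, ← wsum, ih]
    cases a <;> simp [MStep.hdiff, List.count_cons] <;> push_cast <;> ring

lemma length_eq_counts (p : List MStep) :
    p.length = p.count MStep.N + p.count MStep.E + p.count MStep.D := by
  induction p with
  | nil => simp
  | cons a r ih =>
    cases a <;> simp [List.count_cons, ih] <;> omega

lemma dyck_last_ne {p : List MStep} (hp : IsMotzkin p) : p.getLast? ≠ some MStep.N := by
  intro h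
  rcases List.getLast?_eq_some_iff.1 h with ⟨q, rfl⟩
  have h1 := hp.2.1 q ⟨[MStep.N], rfl⟩
  have h2 := hp.2.2
  have h3 : wsum (q ++ [MStep.N]) = wsum q + 1 := by
    rw [wsum, List.map_append, List.sum_append, ← wsum]
    simp [wsum, MStep.hdiff]
  rw [h3] at h2
  omega

lemma count_N_of_dyck {p : List MStep} {n : ℕ} (hp : IsDyck p) (hn : p.length = 2 * n) :
    p.count MStep.N = n := by
  have h1 := wsum_eq_counts p
  have h2 := length_eq_counts p
  have h3 : p.count MStep.D = 0 := List.count_eq_zero.2 hp.2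
  have h4 := hp.1.2.2
  omega

lemma main_formula {p : List MStep} {n : ℕ} (hp : IsDyck p) (hn : p.length = 2 * n)
    (ha : AvoidsNNN p) (hpos : 0 < n) :
    ds p + n = 2 * ((typeW p).count MStep.N + 1) := by
  have hlast := dyck_last_ne hp.1
  have hcN := count_N_of_dyck hp hn
  have hkey := key p ha hp.2 hlast
  have hNin : MStep.N ∈ p := List.count_pos_iff.1 (by omega)
  have hlastT := typeRaw_last p hp.2 hlast hNin
  have hne : typeRaw p ≠ [] := by intro h; rw [h] at hlastT; simp at hlastT
  have hsplit : (typeRaw p).count MStep.N = (typeW p).count MStep.N + 1 := by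
    conv_lhs => rw [← List.dropLast_append_getLast hne]
    have : (typeRaw p).getLast hne = MStep.N := by
      have := List.getLast?_eq_getLast hne
      rw [this] at hlastT
      exact Option.some_injective _ hlastT
    rw [List.count_append, this, typeW]
    simp
  rw [ds_eq_dsS]
  omega

/-- If `[R, S]` is a synchronized interval in the Tamari
lattice on Dyck paths of length `2n` (i.e. `R ≤_D S` and `Type(R) = Type(S)`)
and both `R` and `S` avoid `NNN`, then `ds R = ds S`. -/
theorem ds_eq_of_synchronized (n : ℕ) (R S : List MStep)
    (hR : IsDyck R) (hS : IsDyck S)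
    (hRn : R.length = 2 * n) (hSn : S.length = 2 * n)
    (hRa : AvoidsNNN R) (hSa : AvoidsNNN S)
    (hle : DLE R S) (hty : typeW R = typeW S) :
    ds R = ds S := by
  have hn : 0 < n := by
    rcases Nat.eq_zero_or_pos n with h | h
    · subst h
      simp only [Nat.mul_zero] at hRn
      exact absurd (List.length_eq_zero_iff.1 hRn) hR.1.1
    · exact h
  have h1 := main_formula hR hRn hRa hn
  have h2 := main_formula hS hSn hSa hn
  rw [hty] at h1
  omega
end
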